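/- Let p¹, p², …, pⁿ ∈ ℝ² (n ≥ 2) be distinct points and fix k ∈ {2,…,n}. With a = (x_{pᵏ} − x_{p¹})/2, c = d_{p¹pᵏ}/2, let p* = p¹ + ((c+a)/(2c))(pᵏ − p¹). If for every l ∈ {2,…,n} \ {k} one has d_{pᵏp*} + x_{pᵏ} < d_{pˡp*} + x_{pˡ}, then pᵏ is a Voronoi neighbor of p¹, i.e., V(p¹) ∩ V(pᵏ) contains at least two distinct points. -/

import Mathlib

open scoped RealInnerProductSpace


noncomputable abbrev Pt := EuclideanSpace ℝ (Fin 2)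

/-- The energy-based Voronoi cell of the generator `p i` among the generators `p`. -/
def Vcell {n : ℕ} (p : Fin n → Pt) (i : Fin n) : Set Pt :=
  {q : Pt | ∀ j : Fin n, j ≠ i → dist (p i) q + p i 0 ≤ dist (p j) q + p j 0}

set_option maxHeartbeats 2000000 in
/-- with `p* = p¹ + ((c+a)/(2c))(pᵏ - p¹)` (here `p 0` plays the role of
`p¹`), if `d_{pᵏp*} + x_{pᵏ} < d_{pˡp*} + x_{pˡ}` for every `l ∉ {1, k}`, then `pᵏ` is a
Voronoi neighbor of `p¹`: `V(p¹) ∩ V(pᵏ)` contains at least two distinct points. -/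
theorem strict_test_is_voronoi_neighbor
    (n : ℕ) (p : Fin (n + 2) → Pt) (hp : Function.Injective p)
    (k : Fin (n + 2)) (hk : k ≠ 0) :
    let a : ℝ := (p k 0 - p 0 0) / 2
    let c : ℝ := dist (p 0) (p k) / 2
    let pstar : Pt := p 0 + ((c + a) / (2 * c)) • (p k - p 0)
    (∀ l : Fin (n + 2), l ≠ 0 → l ≠ k →
        dist (p k) pstar + p k 0 < dist (p l) pstar + p l 0) →
      ∃ q1 q2 : Pt, q1 ≠ q2 ∧
        q1 ∈ Vcell p 0 ∩ Vcell p k ∧ q2 ∈ Vcell p 0 ∩ Vcell p k := by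
  intro a c pstar hlt
  have ha : a = (p k 0 - p 0 0) / 2 := rfl
  have hcdef : c = dist (p 0) (p k) / 2 := rfl
  have hpstar : pstar = p 0 + ((c + a) / (2 * c)) • (p k - p 0) := rfl
  have hpk0 : p k ≠ p 0 := fun h => hk (hp h)
  set v : Pt := p k - p 0 with hvdef
  have hvne : v ≠ 0 := sub_ne_zero.mpr hpk0
  have h2c : ‖v‖ = 2 * c := by
    rw [hcdef, dist_eq_norm, norm_sub_rev]; ring
  have hcpos : 0 < c := by
    have := norm_pos_iff.mpr hvne
    linarith [h2c ▸ this]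
  -- |a| ≤ c
  have hv0 : v 0 = p k 0 - p 0 0 := rfl
  have hvsum : ‖v‖ = Real.sqrt (∑ i : Fin 2, (v i) ^ 2) := by
    rw [EuclideanSpace.norm_eq]
    congr 1
    refine Finset.sum_congr rfl fun i _ => ?_
    rw [Real.norm_eq_abs, sq_abs]
  have hac : |a| ≤ c := by
    have h1 : |v 0| ≤ ‖v‖ := by
      rw [hvsum, ← Real.sqrt_sq_eq_abs]
      apply Real.sqrt_le_sqrt
      rw [Fin.sum_univ_two]
      nlinarith [sq_nonneg (v 1)]
    rw [ha, ← hv0]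
    rw [h2c] at h1
    rw [abs_div]
    rw [abs_of_nonneg (by norm_num : (0:ℝ) ≤ 2)]
    linarith
  have hc2a2 : 0 ≤ c ^ 2 - a ^ 2 := by
    nlinarith [sq_abs a, abs_nonneg a]
  have hsq : Real.sqrt (c ^ 2 - a ^ 2) ^ 2 = c ^ 2 - a ^ 2 := Real.sq_sqrt hc2a2
  -- a perpendicular vector of the same norm
  set w : Pt := (WithLp.equiv 2 (Fin 2 → ℝ)).symm ![-(v 1), v 0] with hwdef
  have hw0 : w 0 = -(v 1) := rfl
  have hw1 : w 1 = v 0 := rfl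
  have hvw : ⟪v, w⟫ = 0 := by
    simp [PiLp.inner_apply, Fin.sum_univ_two, hw0, hw1, RCLike.inner_apply]
    ring
  have hwv : ⟪w, v⟫ = 0 := by rw [real_inner_comm]; exact hvw
  have hww : ⟪w, w⟫ = ‖v‖ ^ 2 := by
    rw [← real_inner_self_eq_norm_sq]
    simp [PiLp.inner_apply, Fin.sum_univ_two, hw0, hw1, RCLike.inner_apply]
    rw [EuclideanSpace.norm_eq, EuclideanSpace.norm_eq, Fin.sum_univ_two, Fin.sum_univ_two, hw0, hw1,
      norm_neg, add_comm]
  have hvv : ⟪v, v⟫ = ‖v‖ ^ 2 := real_inner_self_eq_norm_sq v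
  have key : ∀ s t : ℝ, ‖s • v + t • w‖ ^ 2 = (s ^ 2 + t ^ 2) * (2 * c) ^ 2 := by
    intro s t
    rw [← real_inner_self_eq_norm_sq]
    rw [inner_add_left, inner_add_right, inner_add_right,
      real_inner_smul_left, real_inner_smul_left, real_inner_smul_left,
      real_inner_smul_left, real_inner_smul_right, real_inner_smul_right,
      real_inner_smul_right, real_inner_smul_right, hvw, hwv, hvv, hww, h2c]
    ring
  set S : ℝ → ℝ := fun θ => (c + a * Real.cosh θ) / (2 * c) with hSdef
  set T : ℝ → ℝ := fun θ => (Real.sqrt (c ^ 2 - a ^ 2) * Real.sinh θ) / (2 * c) with hTdef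
  set q : ℝ → Pt := fun θ => p 0 + (S θ • v + T θ • w) with hqdef
  have hc0 : (2 * c) ≠ 0 := by positivity
  -- distance from p 0
  have hd0 : ∀ θ, dist (p 0) (q θ) = c * Real.cosh θ + a := by
    intro θ
    have h1 : dist (p 0) (q θ) = ‖S θ • v + T θ • w‖ := by
      rw [hqdef]; exact dist_self_add_right _ _
    have h2 : ‖S θ • v + T θ • w‖ ^ 2 = (c * Real.cosh θ + a) ^ 2 := by
      rw [key]
      simp only [hSdef, hTdef]
      rw [div_pow, div_pow, ← add_div, div_mul_cancel₀ _ (pow_ne_zero 2 hc0)]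
      have hsh := Real.sinh_sq θ
      linear_combination Real.sinh θ ^ 2 * hsq + (c ^ 2 - a ^ 2) * hsh
    have hch := Real.one_le_cosh θ
    have hpos : 0 ≤ c * Real.cosh θ + a := by
      have := abs_le.mp hac
      nlinarith
    rw [h1, ← Real.sqrt_sq (norm_nonneg _), h2, Real.sqrt_sq hpos]
  -- distance from p k
  have hpk : p k = p 0 + v := by rw [hvdef]; abel
  have hdk : ∀ θ, dist (p k) (q θ) = c * Real.cosh θ - a := by
    intro θ
    have hsub : q θ - p k = (S θ - 1) • v + T θ • w := by
      rw [hqdef, hpk]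
      simp only
      module
    have h1 : dist (p k) (q θ) = ‖(S θ - 1) • v + T θ • w‖ := by
      rw [dist_eq_norm', hsub]
    have h2 : ‖(S θ - 1) • v + T θ • w‖ ^ 2 = (c * Real.cosh θ - a) ^ 2 := by
      rw [key]
      simp only [hSdef, hTdef]
      rw [div_sub_one hc0, div_pow, div_pow, ← add_div,
        div_mul_cancel₀ _ (pow_ne_zero 2 hc0)]
      have hsh := Real.sinh_sq θ
      linear_combination Real.sinh θ ^ 2 * hsq + (c ^ 2 - a ^ 2) * hsh
    have hch := Real.one_le_cosh θ
    have hpos : 0 ≤ c * Real.cosh θ - a := by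
      have := abs_le.mp hac
      nlinarith
    rw [h1, ← Real.sqrt_sq (norm_nonneg _), h2, Real.sqrt_sq hpos]
  -- the weighted bisector equality
  have hEq : ∀ θ, dist (p 0) (q θ) + p 0 0 = dist (p k) (q θ) + p k 0 := by
    intro θ
    rw [hd0, hdk, ha]; ring
  -- q 0 = pstar
  have hq0 : q 0 = pstar := by
    rw [hqdef, hpstar]
    simp [hSdef, hTdef]
  -- continuity: the strict inequalities persist near θ = 0
  have hqcont : Continuous q := by
    rw [hqdef]
    fun_prop
  have hall : ∀ᶠ θ in nhds (0 : ℝ), ∀ l, l ≠ 0 → l ≠ k →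
      dist (p k) (q θ) + p k 0 < dist (p l) (q θ) + p l 0 := by
    rw [Filter.eventually_all]
    intro l
    by_cases hl0 : l = 0
    · exact Filter.Eventually.of_forall fun θ h => absurd hl0 h
    by_cases hlk : l = k
    · exact Filter.Eventually.of_forall fun θ _ h => absurd hlk h
    have hf : ContinuousAt (fun θ => dist (p k) (q θ) + p k 0) 0 := by fun_prop
    have hg : ContinuousAt (fun θ => dist (p l) (q θ) + p l 0) 0 := by fun_prop
    have h0 : dist (p k) (q 0) + p k 0 < dist (p l) (q 0) + p l 0 := by
      rw [hq0]; exact hlt l hl0 hlk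
    exact (hf.eventually_lt hg h0).mono fun θ h _ _ => h
  have h2 : ∀ᶠ θ in nhdsWithin (0 : ℝ) {(0:ℝ)}ᶜ,
      (∀ l, l ≠ 0 → l ≠ k →
        dist (p k) (q θ) + p k 0 < dist (p l) (q θ) + p l 0) ∧ θ ≠ 0 :=
    (hall.filter_mono nhdsWithin_le_nhds).and
      (eventually_mem_nhdsWithin.mono fun θ h => h)
  obtain ⟨θ, hθall, hθne⟩ := h2.exists
  -- membership lemma
  have hmem : ∀ θ', (∀ l, l ≠ 0 → l ≠ k →
      dist (p k) (q θ') + p k 0 < dist (p l) (q θ') + p l 0) →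
      q θ' ∈ Vcell p 0 ∩ Vcell p k := by
    intro θ' hθ'
    constructor
    · intro j hj
      rcases eq_or_ne j k with rfl | hjk
      · exact le_of_eq (hEq θ')
      · exact le_of_lt (lt_of_le_of_lt (le_of_eq (hEq θ')) (hθ' j hj hjk))
    · intro j hjk
      rcases eq_or_ne j 0 with rfl | hj0
      · exact le_of_eq (hEq θ').symm
      · exact le_of_lt (hθ' j hj0 hjk)
  -- the two points are q 0 and q θ
  refine ⟨q 0, q θ, ?_, hmem 0 (by rw [hq0]; exact hlt), hmem θ hθall⟩
  intro hcontra
  have hXY : S 0 • v + T 0 • w = S θ • v + T θ • w := by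
    have := hcontra
    rw [hqdef] at this
    exact add_left_cancel this
  have hSeq : S 0 = S θ := by
    have h1 : ⟪v, S 0 • v + T 0 • w⟫ = ⟪v, S θ • v + T θ • w⟫ := by rw [hXY]
    rw [inner_add_right, inner_add_right, real_inner_smul_right, real_inner_smul_right,
      real_inner_smul_right, real_inner_smul_right, hvw, hvv, h2c] at h1
    have h2c2 : (2 * c) ^ 2 ≠ 0 := pow_ne_zero 2 hc0
    field_simp at h1
    exact mul_left_cancel₀ h2c2 (by linear_combination h1)
  have hTeq : T 0 = T θ := by
    have h1 : ⟪w, S 0 • v + T 0 • w⟫ = ⟪w, S θ • v + T θ • w⟫ := by rw [hXY]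
    rw [inner_add_right, inner_add_right, real_inner_smul_right, real_inner_smul_right,
      real_inner_smul_right, real_inner_smul_right, hwv, hww, h2c] at h1
    have h2c2 : (2 * c) ^ 2 ≠ 0 := pow_ne_zero 2 hc0
    field_simp at h1
    exact mul_left_cancel₀ h2c2 (by linear_combination h1)
  by_cases hA : a = 0
  · -- use T : sinh θ = 0 forces θ = 0
    have hTθ : T θ = 0 := by rw [← hTeq, hTdef]; simp
    rw [hTdef] at hTθ
    simp only at hTθ
    have hsp : Real.sqrt (c ^ 2 - a ^ 2) = c := by
      rw [hA]
      norm_num [Real.sqrt_sq hcpos.le]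
    rw [hsp] at hTθ
    have hsinh : Real.sinh θ = 0 := by
      rcases div_eq_zero_iff.mp hTθ with h | h
      · rcases mul_eq_zero.mp h with h' | h'
        · exact absurd h' (ne_of_gt hcpos)
        · exact h'
      · exact absurd h hc0
    exact hθne (Real.sinh_eq_zero.mp hsinh)
  · -- use S : a * cosh θ = a forces cosh θ = 1, θ = 0
    rw [hSdef] at hSeq
    simp only [Real.cosh_zero, mul_one] at hSeq
    field_simp at hSeq
    exact (Real.one_lt_cosh.mpr hθne).ne' (mul_left_cancel₀ hA (by linear_combination -hSeq))
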